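/- Let U ∈ E_{D,p}(r) be a minimal solution. Then the image of its support is contained in the p-minimal support: Im(φ_U) ⊆ Σ_p(D). -/

import Mathlib

open scoped BigOperators
open scoped Classical

/-- `sp p u` is the sum of the base-`p` digits of `u`. -/
def sp (p u : ℕ) : ℕ := (Nat.digits p u).sum

variable {ι : Type} [Fintype ι]

/-- The coordinatewise sum `Σ_{d ∈ D} u_d · d`. -/
def sigmaSum (D : Finset (ι → ℕ)) (U : D → ℕ) (k : ι) : ℕ :=
  ∑ d, U d * (d : ι → ℕ) k

/-- Membership in the set `E_{D,p}(r)`. -/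
def memE (p : ℕ) (D : Finset (ι → ℕ)) (r : ℕ) (U : D → ℕ) : Prop :=
  (∀ d, U d ≤ p ^ r - 1) ∧
  (∀ k, (p ^ r - 1) ∣ sigmaSum D U k ∧ 0 < sigmaSum D U k)

/-- The `p`-weight `s_p(U)` of a tuple `U`. -/
def spU (p : ℕ) (D : Finset (ι → ℕ)) (U : D → ℕ) : ℕ := ∑ d, sp p (U d)

/-- `s_{D,p}(r)`, the minimal `p`-weight of an element of `E_{D,p}(r)`. -/
noncomputable def sDp (p : ℕ) (D : Finset (ι → ℕ)) (r : ℕ) : ℕ :=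
  sInf { s | ∃ U : D → ℕ, memE p D r U ∧ spU p D U = s }

/-- The `p`-density `δ_p(D)` of the set `D`. -/
noncomputable def density (p : ℕ) (D : Finset (ι → ℕ)) : ℝ :=
  (1 / ((p : ℝ) - 1)) * sInf { x : ℝ | ∃ r : ℕ, 1 ≤ r ∧ x = (sDp p D r : ℝ) / (r : ℝ) }

/-- A minimal solution in `E_{D,p}(r)`. -/
def minimalSol (p : ℕ) (D : Finset (ι → ℕ)) (r : ℕ) (U : D → ℕ) : Prop :=
  memE p D r U ∧ (spU p D U : ℝ) = ((p : ℝ) - 1) * (r : ℝ) * density p D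

/-- `φ_r(U) = (1/(p^r − 1)) Σ_{d ∈ D} u_d · d`. -/
def phiMap (p : ℕ) (D : Finset (ι → ℕ)) (r : ℕ) (U : D → ℕ) (k : ι) : ℕ :=
  sigmaSum D U k / (p ^ r - 1)

/-- The shift `δ_r` on `{0, …, p^r − 1}`. -/
def shiftFun (p r u : ℕ) : ℕ := if u = p ^ r - 1 then u else (p * u) % (p ^ r - 1)

/-- The componentwise action of the shift `δ_r` on tuples. -/
def shiftE (p : ℕ) (D : Finset (ι → ℕ)) (r : ℕ) (U : D → ℕ) : D → ℕ :=
  fun d => shiftFun p r (U d)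

/-- The support `φ_U : ℤ/rℤ → ℕ^n` of a solution `U ∈ E_{D,p}(r)`. -/
def suppMap (p : ℕ) (D : Finset (ι → ℕ)) (r : ℕ) (U : D → ℕ) (k : ZMod r) : ι → ℕ :=
  phiMap p D r ((shiftE p D r)^[k.val] U)

/-- Membership in `MI_{D,p}(r)`: minimal irreducible solutions. -/
def memMI (p : ℕ) (D : Finset (ι → ℕ)) (r : ℕ) (U : D → ℕ) : Prop :=
  minimalSol p D r U ∧ Function.Injective (suppMap p D r U)

/-- The `p`-minimal support `Σ_p(D)`. -/
def minSupport (p : ℕ) (D : Finset (ι → ℕ)) : Set (ι → ℕ) :=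
  { e | ∃ r : ℕ, 1 ≤ r ∧ ∃ U : D → ℕ, memMI p D r U ∧ e ∈ Set.range (suppMap p D r U) }

/-- `ψ(U)`: the tuple of last base-`p` digits of `U`. -/
def psiMap (p : ℕ) (D : Finset (ι → ℕ)) (U : D → ℕ) : D → ℕ := fun d => U d % p

/-- The set `V(e, e')` of digit tuples of minimal irreducible solutions with
`φ_U(−1) = e` and `φ_U(0) = e'`. -/
def Vset (p : ℕ) (D : Finset (ι → ℕ)) (e e' : ι → ℕ) : Set (D → ℕ) :=
  { v | ∃ r : ℕ, 1 ≤ r ∧ ∃ U : D → ℕ, memMI p D r U ∧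
      suppMap p D r U (-1) = e ∧ suppMap p D r U 0 = e' ∧ psiMap p D U = v }

/-- The weight `w(V) = Σ_{d ∈ D} v_d`. -/
def weightV (D : Finset (ι → ℕ)) (v : D → ℕ) : ℕ := ∑ d, v d

set_option linter.unusedSectionVars false

section ScalarLemmas

lemma sp_def {p : ℕ} (hp : 2 ≤ p) (u : ℕ) : sp p u = u % p + sp p (u / p) := by
  rcases Nat.eq_zero_or_pos u with h | h
  · simp [h, sp]
  · rw [sp, sp, Nat.digits_def' hp h, List.sum_cons]

lemma sp_split {p : ℕ} (hp : 2 ≤ p) (t : ℕ) : ∀ u : ℕ,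
    sp p u = sp p (u % p ^ t) + sp p (u / p ^ t) := by
  induction t with
  | zero => intro u; simp [sp, Nat.mod_one]
  | succ t ih =>
      intro u
      have h1 : u / p ^ (t + 1) = (u / p) / p ^ t := by
        rw [Nat.div_div_eq_div_mul, pow_succ']
      have h2 : (u % p ^ (t + 1)) % p = u % p :=
        Nat.mod_mod_of_dvd u (dvd_pow_self p (Nat.succ_ne_zero t))
      have h3 : (u % p ^ (t + 1)) / p = (u / p) % p ^ t := by
        rw [← Nat.mod_mul_right_div_self, pow_succ']
      rw [sp_def hp u, ih (u / p), sp_def hp (u % p ^ (t+1)), h1, h2, h3, add_assoc]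

lemma pow_pos' {p : ℕ} (hp : 2 ≤ p) (t : ℕ) : 0 < p ^ t := pow_pos (by omega) t
lemma mod_split (u b c : ℕ) : u % (b * c) = u % b + b * (u / b % c) := by
  have h1 : u / b % c = u % (b * c) / b := (Nat.mod_mul_right_div_self u b c).symm
  have h2 : u % (b * c) % b = u % b := Nat.mod_mod_of_dvd u (dvd_mul_right b c)
  rw [h1, ← h2, Nat.mod_add_div]
lemma div_le_pow_pred {p r t u : ℕ} (hp : 2 ≤ p) (ht : t ≤ r) (hu : u ≤ p ^ r - 1) :
    u / p ^ (r - t) ≤ p ^ t - 1 := by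
  have hmul : p ^ t * p ^ (r - t) = p ^ r := by rw [← pow_add]; congr 1; omega
  have hlt : u / p ^ (r - t) < p ^ t := by
    rw [Nat.div_lt_iff_lt_mul (pow_pos' hp _), hmul]
    have := pow_pos' hp r
    omega
  omega

lemma shiftFun_closed {p r u : ℕ} (hp : 2 ≤ p) (hr : 1 ≤ r) (hu : u ≤ p ^ r - 1) :
    shiftFun p r u = p * (u % p ^ (r - 1)) + u / p ^ (r - 1) := by
  have hpr : p ^ (r - 1) * p = p ^ r := by
    rw [← pow_succ]; congr 1; omega
  have hpos := pow_pos' hp (r - 1)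
  have hple : p ≤ p ^ r := by
    calc p = p ^ 1 := (pow_one p).symm
    _ ≤ p ^ r := Nat.pow_le_pow_right (by omega) hr
  have hple2 : p ^ (r - 1) ≤ p ^ r := Nat.pow_le_pow_right (by omega) (by omega)
  have hdecomp : p ^ r - 1 = (p ^ (r - 1) - 1) + p ^ (r - 1) * (p - 1) := by
    have h2 : p ^ (r - 1) * (p - 1) = p ^ r - p ^ (r - 1) := by
      rw [Nat.mul_sub, hpr, mul_one]
    omega
  have hkey : p * (p ^ (r - 1) - 1) = p ^ r - p := by
    rw [Nat.mul_sub, mul_comm p (p ^ (r - 1)), hpr, mul_one]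
  rcases eq_or_ne u (p ^ r - 1) with h | h
  · subst h
    have hmod : (p ^ r - 1) % p ^ (r - 1) = p ^ (r - 1) - 1 := by
      rw [hdecomp, Nat.add_mul_mod_self_left, Nat.mod_eq_of_lt (by omega)]
    have hdiv : (p ^ r - 1) / p ^ (r - 1) = p - 1 := by
      rw [hdecomp, Nat.add_mul_div_left _ _ hpos, Nat.div_eq_of_lt (by omega), zero_add]
    rw [shiftFun, if_pos rfl, hmod, hdiv]
    omega
  · rw [shiftFun, if_neg h]
    have hu' : u < p ^ r - 1 := by omega
    have hid : u % p ^ (r - 1) + p ^ (r - 1) * (u / p ^ (r - 1)) = u := Nat.mod_add_div u _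
    set s := u % p ^ (r - 1) with hsdef
    set q := u / p ^ (r - 1) with hqdef
    have hs : s < p ^ (r - 1) := Nat.mod_lt u hpos
    have hq : q ≤ p - 1 := by
      have := div_le_pow_pred hp hr hu
      simpa [pow_one] using this
    have hlt : p * s + q < p ^ r - 1 := by
      rcases eq_or_ne q (p - 1) with hq' | hq'
      · have hs' : s < p ^ (r - 1) - 1 := by
          rcases Nat.lt_or_ge s (p ^ (r - 1) - 1) with h' | h'
          · exact h'
          · exfalso
            apply h
            have hseq : s = p ^ (r - 1) - 1 := by omega
            have : p ^ (r - 1) * q = p ^ r - p ^ (r - 1) := by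
              rw [hq', Nat.mul_sub, hpr, mul_one]
            omega
        have h2 : p * s + p ≤ p * (p ^ (r - 1) - 1) := by
          have h5 : p * (s + 1) = p * s + p := by ring
          have := Nat.mul_le_mul_left p (show s + 1 ≤ p ^ (r - 1) - 1 by omega)
          omega
        omega
      · have h2 : p * s ≤ p * (p ^ (r - 1) - 1) := Nat.mul_le_mul_left p (by omega)
        omega
    have hdecomp2 : p * u = (p * s + q) + (p ^ r - 1) * q := by
      have h4 : p * u = p * s + p * (p ^ (r - 1) * q) := by
        conv_lhs => rw [← hid]
        ring
      have h5 : p * (p ^ (r - 1) * q) = p ^ r * q := by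
        rw [← mul_assoc, mul_comm p (p ^ (r - 1)), hpr]
      have h6 : (p ^ r - 1) * q = p ^ r * q - q := by
        rw [Nat.sub_mul, one_mul]
      have h7 : q ≤ p ^ r * q := Nat.le_mul_of_pos_left q (pow_pos' hp r)
      omega
    rw [hdecomp2, Nat.add_mul_mod_self_left, Nat.mod_eq_of_lt hlt]

lemma shiftFun_iter {p r : ℕ} (hp : 2 ≤ p) (hr : 1 ≤ r) :
    ∀ m : ℕ, m ≤ r → ∀ u : ℕ, u ≤ p ^ r - 1 →
      (shiftFun p r)^[m] u = p ^ m * (u % p ^ (r - m)) + u / p ^ (r - m) := by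
  intro m
  induction m with
  | zero =>
      intro _ u hu
      have hur : u < p ^ r := by have := pow_pos' hp r; omega
      have h1 : u % p ^ (r - 0) = u := by rw [Nat.sub_zero]; exact Nat.mod_eq_of_lt hur
      have h2 : u / p ^ (r - 0) = 0 := by rw [Nat.sub_zero]; exact Nat.div_eq_of_lt hur
      rw [Function.iterate_zero_apply, h1, h2, pow_zero, one_mul, add_zero]
  | succ m ih =>
      intro hm u hu
      have hm' : m ≤ r := by omega
      rw [Function.iterate_succ_apply', ih hm' u hu]
      set A := u % p ^ (r - m) with hA
      set B := u / p ^ (r - m) with hB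
      have hBle : B ≤ p ^ m - 1 := div_le_pow_pred hp hm' hu
      have hsplit : A = u % p ^ (r - m - 1) + p ^ (r - m - 1) * ((u / p ^ (r - m - 1)) % p) := by
        have hbc : p ^ (r - m - 1) * p = p ^ (r - m) := by
          rw [← pow_succ]; congr 1; omega
        rw [hA, ← hbc, mod_split]
      set s := u % p ^ (r - m - 1) with hs
      set q := (u / p ^ (r - m - 1)) % p with hq
      have hslt : s < p ^ (r - m - 1) := Nat.mod_lt u (pow_pos' hp _)
      have hqlt : q < p := Nat.mod_lt _ (by omega)
      set v := p ^ m * A + B with hv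
      have hveq : v = (p ^ m * s + B) + p ^ (r - 1) * q := by
        have hmm : p ^ m * (p ^ (r - m - 1) * q) = p ^ (r - 1) * q := by
          rw [← mul_assoc, ← pow_add]
          congr 2
          omega
        calc v = p ^ m * (s + p ^ (r - m - 1) * q) + B := by rw [hv, ← hsplit]
        _ = (p ^ m * s + B) + p ^ m * (p ^ (r - m - 1) * q) := by ring
        _ = (p ^ m * s + B) + p ^ (r - 1) * q := by rw [hmm]
      have hlow : p ^ m * s + B < p ^ (r - 1) := by
        have h1 : p ^ m * s ≤ p ^ m * (p ^ (r - m - 1) - 1) := Nat.mul_le_mul_left _ (by omega)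
        have h2 : p ^ m * (p ^ (r - m - 1) - 1) = p ^ (r - 1) - p ^ m := by
          rw [Nat.mul_sub, ← pow_add, mul_one]; congr 2; omega
        have h3 : p ^ m ≤ p ^ (r - 1) := Nat.pow_le_pow_right (by omega) (by omega)
        have h4 := pow_pos' hp m
        omega
      have hvle : v ≤ p ^ r - 1 := by
        have h1 : p ^ (r - 1) * q ≤ p ^ (r - 1) * (p - 1) := Nat.mul_le_mul_left _ (by omega)
        have h2 : p ^ (r - 1) * (p - 1) = p ^ r - p ^ (r - 1) := by
          rw [Nat.mul_sub, ← pow_succ, mul_one]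
          congr 2; omega
        have h3 : p ^ (r - 1) ≤ p ^ r := Nat.pow_le_pow_right (by omega) (by omega)
        have h4 := pow_pos' hp (r - 1)
        omega
      rw [shiftFun_closed hp hr hvle]
      have hvmod : v % p ^ (r - 1) = p ^ m * s + B := by
        rw [hveq, Nat.add_mul_mod_self_left, Nat.mod_eq_of_lt hlow]
      have hvdiv : v / p ^ (r - 1) = q := by
        rw [hveq, Nat.add_mul_div_left _ _ (pow_pos' hp _), Nat.div_eq_of_lt hlow, zero_add]
      rw [hvmod, hvdiv]
      have hgoal1 : u / p ^ (r - (m + 1)) = p * B + q := by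
        have h1 : u / p ^ (r - m - 1) / p = u / p ^ (r - m) := by
          rw [Nat.div_div_eq_div_mul]
          congr 1
          rw [← pow_succ]; congr 1; omega
        have h2 := Nat.mod_add_div (u / p ^ (r - m - 1)) p
        rw [h1] at h2
        have hrm : r - (m + 1) = r - m - 1 := by omega
        rw [hrm, hq, hB]
        linarith
      have hgoal2 : u % p ^ (r - (m + 1)) = s := by
        have hrm : r - (m + 1) = r - m - 1 := by omega
        rw [hs, hrm]
      rw [hgoal1, hgoal2]
      ring

lemma shiftFun_iter_le {p r m u : ℕ} (hp : 2 ≤ p) (hr : 1 ≤ r) (hm : m ≤ r)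
    (hu : u ≤ p ^ r - 1) : (shiftFun p r)^[m] u ≤ p ^ r - 1 := by
  rw [shiftFun_iter hp hr m hm u hu]
  have h1 : u % p ^ (r - m) ≤ p ^ (r - m) - 1 := by
    have := Nat.mod_lt u (pow_pos' hp (r - m))
    omega
  have h2 : u / p ^ (r - m) ≤ p ^ m - 1 := div_le_pow_pred hp hm hu
  have h3 : p ^ m * (u % p ^ (r - m)) ≤ p ^ m * (p ^ (r - m) - 1) := Nat.mul_le_mul_left _ h1
  have h4 : p ^ m * (p ^ (r - m) - 1) = p ^ r - p ^ m := by
    rw [Nat.mul_sub, ← pow_add, mul_one]; congr 2; omega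
  have h5 : p ^ m ≤ p ^ r := Nat.pow_le_pow_right (by omega) (by omega)
  have h6 := pow_pos' hp m
  omega

lemma sp_shiftFun_iter {p r m u : ℕ} (hp : 2 ≤ p) (hr : 1 ≤ r) (hm : m ≤ r)
    (hu : u ≤ p ^ r - 1) : sp p ((shiftFun p r)^[m] u) = sp p u := by
  rw [shiftFun_iter hp hr m hm u hu]
  set A := u % p ^ (r - m) with hA
  set B := u / p ^ (r - m) with hB
  have hBlt : B < p ^ m := by
    have := div_le_pow_pred hp hm hu
    have := pow_pos' hp m
    omega
  have h1 : (p ^ m * A + B) % p ^ m = B := by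
    rw [mul_comm, Nat.mul_add_mod', Nat.mod_eq_of_lt hBlt]
  have h2 : (p ^ m * A + B) / p ^ m = A := by
    rw [mul_comm (p ^ m) A, add_comm, Nat.add_mul_div_right _ _ (pow_pos' hp m),
      Nat.div_eq_of_lt hBlt, zero_add]
  rw [sp_split hp m (p ^ m * A + B), h1, h2, sp_split hp (r - m) u, ← hA, ← hB, Nat.add_comm]

end ScalarLemmas

section SumLemmas

variable {ι : Type} [Fintype ι]

lemma helperXY (a2 a3 X Y E : ℤ) (h1 : X + a2 * Y = (a2 * a3 - 1) * E)
    (h2 : a3 * X + Y = (a2 * a3 - 1) * E) (hne : a2 * a3 - 1 ≠ 0) :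
    X = (a2 - 1) * E ∧ Y = (a3 - 1) * E := by
  constructor
  · have h3 : (a2 * a3 - 1) * X = (a2 * a3 - 1) * ((a2 - 1) * E) := by
      linear_combination a2 * h2 - h1
    exact mul_left_cancel₀ hne h3
  · have h3 : (a2 * a3 - 1) * Y = (a2 * a3 - 1) * ((a3 - 1) * E) := by
      linear_combination a3 * h1 - h2
    exact mul_left_cancel₀ hne h3

lemma helper1 (a b c w g h X Y e : ℤ) (hw : w = X + c * h) (hX : X = (c - 1) * e)
    (hY : Y = (a * b - 1) * e) (hYs : Y = h + b * g) :
    (a * b - 1) * (a * w + g) = (a * b * c - 1) * (a * h + g) := by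
  linear_combination ((a * b - 1) * a) * hw + ((a * b - 1) * a) * hX
    - (a * (c - 1)) * hY + (a * (c - 1)) * hYs

lemma helper2 (a b c A B C X Y e : ℤ) (hb : B = C + a * Y) (hX : X = A + b * C)
    (hX2 : X = (a * b - 1) * e) (hY : Y = (c - 1) * e) :
    (a * b * c - 1) * (a * A + C) = (a * b - 1) * (c * a * A + B) := by
  linear_combination (-(a * b - 1)) * hb + ((a * b - 1) * a) * hY
    - ((c - 1) * a) * hX + ((c - 1) * a) * hX2 - (2*(a * b - 1) * a) * hY

lemma sigma_congr (D : Finset (ι → ℕ)) {f g : D → ℕ} (h : ∀ d, f d = g d) (k : ι) :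
    sigmaSum D f k = sigmaSum D g k :=
  Finset.sum_congr rfl fun d _ => by rw [h d]

lemma sigma_add (D : Finset (ι → ℕ)) (f g : D → ℕ) (k : ι) :
    sigmaSum D (fun d => f d + g d) k = sigmaSum D f k + sigmaSum D g k := by
  unfold sigmaSum
  rw [← Finset.sum_add_distrib]
  exact Finset.sum_congr rfl fun d _ => add_mul _ _ _

lemma sigma_mul (D : Finset (ι → ℕ)) (t : ℕ) (f : D → ℕ) (k : ι) :
    sigmaSum D (fun d => t * f d) k = t * sigmaSum D f k := by
  unfold sigmaSum
  rw [Finset.mul_sum]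
  exact Finset.sum_congr rfl fun d _ => mul_assoc _ _ _

lemma sigma_split (D : Finset (ι → ℕ)) (W : D → ℕ) (t : ℕ) (k : ι) :
    sigmaSum D W k = sigmaSum D (fun d => W d % t) k + t * sigmaSum D (fun d => W d / t) k := by
  rw [← sigma_mul, ← sigma_add]
  exact sigma_congr D (fun d => (Nat.mod_add_div _ _).symm) k

lemma shiftE_iter_apply (p : ℕ) (D : Finset (ι → ℕ)) (r m : ℕ) (V : D → ℕ) (d : D) :
    ((shiftE p D r)^[m] V) d = (shiftFun p r)^[m] (V d) := by
  induction m generalizing V with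
  | zero => rfl
  | succ m ih =>
      rw [Function.iterate_succ_apply, Function.iterate_succ_apply]
      exact ih (shiftE p D r V)

lemma sigma_iter {p r m : ℕ} (D : Finset (ι → ℕ)) (hp : 2 ≤ p) (hr : 1 ≤ r) (hm : m ≤ r)
    (V : D → ℕ) (hV : ∀ d, V d ≤ p ^ r - 1) (k : ι) :
    sigmaSum D ((shiftE p D r)^[m] V) k
      = p ^ m * sigmaSum D (fun d => V d % p ^ (r - m)) k
        + sigmaSum D (fun d => V d / p ^ (r - m)) k := by
  have hfun : ∀ d : D, ((shiftE p D r)^[m] V) d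
      = p ^ m * (V d % p ^ (r - m)) + V d / p ^ (r - m) := by
    intro d
    rw [shiftE_iter_apply, shiftFun_iter hp hr m hm (V d) (hV d)]
  rw [sigma_congr D hfun k, sigma_add, sigma_mul]

lemma memE_iter {p r m : ℕ} {D : Finset (ι → ℕ)} (hp : 2 ≤ p) (hr : 1 ≤ r) (hm : m ≤ r)
    {V : D → ℕ} (hV : memE p D r V) : memE p D r ((shiftE p D r)^[m] V) := by
  have hpm : p ^ m * p ^ (r - m) = p ^ r := by rw [← pow_add]; congr 1; omega
  constructor
  · intro d
    rw [shiftE_iter_apply]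
    exact shiftFun_iter_le hp hr hm (hV.1 d)
  · intro k
    set X := sigmaSum D (fun d => V d % p ^ (r - m)) k with hXd
    set Y := sigmaSum D (fun d => V d / p ^ (r - m)) k with hYd
    have hs : sigmaSum D V k = X + p ^ (r - m) * Y := sigma_split D V (p ^ (r - m)) k
    have hit : sigmaSum D ((shiftE p D r)^[m] V) k = p ^ m * X + Y :=
      sigma_iter D hp hr hm V hV.1 k
    have hdvd0 := (hV.2 k).1
    have hpos0 := (hV.2 k).2
    have hQpos : 0 < p ^ r - 1 := by
      have := pow_pos' hp r
      have hple : 2 ≤ p ^ r := by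
        calc 2 ≤ p := hp
        _ = p ^ 1 := (pow_one p).symm
        _ ≤ p ^ r := Nat.pow_le_pow_right (by omega) hr
      omega
    constructor
    · have h1 : (p ^ r - 1) ∣ p ^ m * sigmaSum D V k := Dvd.dvd.mul_left hdvd0 _
      have hkey : p ^ m * sigmaSum D V k = (p ^ m * X + Y) + (p ^ r - 1) * Y := by
        rw [hs, mul_add, ← mul_assoc, hpm]
        have h2 : (p ^ r - 1) * Y = p ^ r * Y - Y := by rw [Nat.sub_mul, one_mul]
        have h3 : Y ≤ p ^ r * Y := Nat.le_mul_of_pos_left _ (pow_pos' hp r)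
        omega
      rw [hkey] at h1
      have h4 := Nat.dvd_sub h1 (dvd_mul_right (p ^ r - 1) Y)
      rw [Nat.add_sub_cancel] at h4
      rw [hit]
      exact h4
    · rw [hit]
      by_contra hc
      push_neg at hc
      have h1 : Y = 0 := by omega
      have h2 : p ^ m * X = 0 := by omega
      have h3 : X = 0 := by
        rcases Nat.mul_eq_zero.mp h2 with h | h
        · exact absurd h (by have := pow_pos' hp m; omega)
        · exact h
      rw [hs, h1, h3] at hpos0
      simp at hpos0

lemma iterate_period {p r : ℕ} {D : Finset (ι → ℕ)} (hp : 2 ≤ p) (hr : 1 ≤ r)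
    {V : D → ℕ} (hV : memE p D r V) : (shiftE p D r)^[r] V = V := by
  funext d
  rw [shiftE_iter_apply, shiftFun_iter hp hr r le_rfl (V d) (hV.1 d)]
  simp [Nat.sub_self, Nat.mod_one]

lemma iterate_mod {p r : ℕ} {D : Finset (ι → ℕ)} (hp : 2 ≤ p) (hr : 1 ≤ r)
    {V : D → ℕ} (hV : memE p D r V) (j : ℕ) :
    (shiftE p D r)^[j] V = (shiftE p D r)^[j % r] V := by
  have hmulV : ∀ t, (shiftE p D r)^[r * t] V = V := by
    intro t
    induction t with
    | zero => simp
    | succ t ih =>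
        rw [Nat.mul_succ, Function.iterate_add_apply, iterate_period hp hr hV, ih]
  conv_lhs => rw [← Nat.mod_add_div j r, Function.iterate_add_apply, hmulV (j / r)]

lemma memE_iter_any {p r : ℕ} {D : Finset (ι → ℕ)} (hp : 2 ≤ p) (hr : 1 ≤ r)
    {V : D → ℕ} (hV : memE p D r V) (j : ℕ) : memE p D r ((shiftE p D r)^[j] V) := by
  rw [iterate_mod hp hr hV j]
  exact memE_iter hp hr (le_of_lt (Nat.mod_lt j (by omega))) hV

lemma spU_iter {p r m : ℕ} {D : Finset (ι → ℕ)} (hp : 2 ≤ p) (hr : 1 ≤ r) (hm : m ≤ r)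
    {V : D → ℕ} (hV : memE p D r V) : spU p D ((shiftE p D r)^[m] V) = spU p D V := by
  unfold spU
  refine Finset.sum_congr rfl fun d _ => ?_
  rw [shiftE_iter_apply]
  exact sp_shiftFun_iter hp hr hm (hV.1 d)

lemma spU_decomp {p : ℕ} (hp : 2 ≤ p) (D : Finset (ι → ℕ)) (t : ℕ) (V : D → ℕ) :
    spU p D V = spU p D (fun d => V d % p ^ t) + spU p D (fun d => V d / p ^ t) := by
  unfold spU
  rw [← Finset.sum_add_distrib]
  exact Finset.sum_congr rfl fun d _ => sp_split hp t (V d)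

lemma suppMap_natCast {p r : ℕ} {D : Finset (ι → ℕ)} (hp : 2 ≤ p) (hr : 1 ≤ r)
    {V : D → ℕ} (hV : memE p D r V) (j : ℕ) :
    suppMap p D r V ((j : ℕ) : ZMod r) = phiMap p D r ((shiftE p D r)^[j] V) := by
  haveI : NeZero r := ⟨by omega⟩
  show phiMap p D r ((shiftE p D r)^[((j : ℕ) : ZMod r).val] V) = _
  rw [ZMod.val_natCast, iterate_mod hp hr hV j]

lemma phi_mem_range {p r : ℕ} {D : Finset (ι → ℕ)} (hp : 2 ≤ p) (hr : 1 ≤ r)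
    {V : D → ℕ} (hV : memE p D r V) (j : ℕ) :
    phiMap p D r ((shiftE p D r)^[j] V) ∈ Set.range (suppMap p D r V) :=
  ⟨((j : ℕ) : ZMod r), suppMap_natCast hp hr hV j⟩

lemma spU_ge {p : ℕ} (hp : 2 ≤ p) (D : Finset (ι → ℕ)) (r' : ℕ) (hr' : 1 ≤ r')
    (V : D → ℕ) (hV : memE p D r' V) :
    ((p : ℝ) - 1) * (r' : ℝ) * density p D ≤ (spU p D V : ℝ) := by
  set S : Set ℝ := { x : ℝ | ∃ r : ℕ, 1 ≤ r ∧ x = (sDp p D r : ℝ) / (r : ℝ) } with hS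
  have hbdd : BddBelow S := by
    refine ⟨0, ?_⟩
    rintro x ⟨t, ht, rfl⟩
    positivity
  have hmem : (sDp p D r' : ℝ) / (r' : ℝ) ∈ S := ⟨r', hr', rfl⟩
  have h1 : sInf S ≤ (sDp p D r' : ℝ) / (r' : ℝ) := csInf_le hbdd hmem
  have h2 : sDp p D r' ≤ spU p D V := Nat.sInf_le ⟨V, hV, rfl⟩
  have hp1 : (0 : ℝ) < (p : ℝ) - 1 := by
    have : (2 : ℝ) ≤ (p : ℝ) := by exact_mod_cast hp
    linarith
  have hr0 : (0 : ℝ) < (r' : ℝ) := by exact_mod_cast hr'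
  have hdens : density p D = 1 / ((p : ℝ) - 1) * sInf S := by rw [hS]; rfl
  have hcalc : ((p : ℝ) - 1) * (r' : ℝ) * density p D = (r' : ℝ) * sInf S := by
    rw [hdens]
    field_simp
  rw [hcalc]
  calc (r' : ℝ) * sInf S ≤ (r' : ℝ) * ((sDp p D r' : ℝ) / (r' : ℝ)) :=
        mul_le_mul_of_nonneg_left h1 (le_of_lt hr0)
  _ = (sDp p D r' : ℝ) := by field_simp
  _ ≤ (spU p D V : ℝ) := by exact_mod_cast h2

end SumLemmas

section SplitLemmas

variable {ι : Type} [Fintype ι]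

lemma two_le_pow {p t : ℕ} (hp : 2 ≤ p) (ht : 1 ≤ t) : 2 ≤ p ^ t := by
  calc 2 ≤ p := hp
  _ = p ^ 1 := (pow_one p).symm
  _ ≤ p ^ t := Nat.pow_le_pow_right (by omega) ht

lemma div_eq_div_of_cross {Q1 Q2 s1 s2 : ℕ} (hQ1 : 0 < Q1) (hQ2 : 0 < Q2)
    (hdvd : Q1 ∣ s1) (hcross : Q2 * s1 = Q1 * s2) : s1 / Q1 = s2 / Q2 := by
  obtain ⟨f, hf⟩ := hdvd
  have hs2 : s2 = Q2 * f := by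
    have h1 : Q1 * (Q2 * f) = Q1 * s2 := by rw [← hcross, hf]; ring
    exact (Nat.eq_of_mul_eq_mul_left hQ1 h1).symm
  rw [hf, hs2, Nat.mul_div_cancel_left _ hQ1, Nat.mul_div_cancel_left _ hQ2]

lemma split_XY {p r m : ℕ} {D : Finset (ι → ℕ)} (hp : 2 ≤ p) (hr : 1 ≤ r)
    (hm0 : 0 < m) (hmr : m < r) {V : D → ℕ} (hV : memE p D r V)
    (heq : phiMap p D r V = phiMap p D r ((shiftE p D r)^[m] V)) (k : ι) :
    sigmaSum D (fun d => V d % p ^ (r - m)) k = (p ^ (r - m) - 1) * phiMap p D r V k ∧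
    sigmaSum D (fun d => V d / p ^ (r - m)) k = (p ^ m - 1) * phiMap p D r V k := by
  have h2r : 2 ≤ p ^ r := two_le_pow hp hr
  have h2rm : 2 ≤ p ^ (r - m) := two_le_pow hp (by omega)
  have h2m : 2 ≤ p ^ m := two_le_pow hp (by omega)
  have hσ : sigmaSum D V k = (p ^ r - 1) * phiMap p D r V k := by
    rw [phiMap, mul_comm]
    exact (Nat.div_mul_cancel (hV.2 k).1).symm
  have hmem' := memE_iter hp hr (le_of_lt hmr) hV
  have hσm : sigmaSum D ((shiftE p D r)^[m] V) k = (p ^ r - 1) * phiMap p D r V k := by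
    have h1 : phiMap p D r ((shiftE p D r)^[m] V) k = phiMap p D r V k := by rw [heq]
    rw [← h1, phiMap, mul_comm]
    exact (Nat.div_mul_cancel (hmem'.2 k).1).symm
  have hs : sigmaSum D (fun d => V d % p ^ (r - m)) k
      + p ^ (r - m) * sigmaSum D (fun d => V d / p ^ (r - m)) k
      = (p ^ r - 1) * phiMap p D r V k := by
    rw [← hσ]
    exact (sigma_split D V (p ^ (r - m)) k).symm
  have hit : p ^ m * sigmaSum D (fun d => V d % p ^ (r - m)) k
      + sigmaSum D (fun d => V d / p ^ (r - m)) k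
      = (p ^ r - 1) * phiMap p D r V k := by
    rw [← hσm]
    exact (sigma_iter D hp hr (le_of_lt hmr) V hV.1 k).symm
  have hab : (p : ℤ) ^ (r - m) * (p : ℤ) ^ m = (p : ℤ) ^ r := by
    rw [← pow_add]; congr 1; omega
  zify [show 1 ≤ p ^ r by omega] at hs hit
  rw [← hab] at hs hit
  have hne : (p : ℤ) ^ (r - m) * (p : ℤ) ^ m - 1 ≠ 0 := by
    rw [hab]
    have : (2 : ℤ) ≤ (p : ℤ) ^ r := by exact_mod_cast h2r
    omega
  obtain ⟨hXz, hYz⟩ := helperXY ((p : ℤ) ^ (r - m)) ((p : ℤ) ^ m)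
    (sigmaSum D (fun d => V d % p ^ (r - m)) k : ℤ)
    (sigmaSum D (fun d => V d / p ^ (r - m)) k : ℤ)
    (phiMap p D r V k : ℤ) hs hit hne
  constructor
  · zify [show 1 ≤ p ^ (r - m) by omega]
    exact hXz
  · zify [show 1 ≤ p ^ m by omega]
    exact hYz

lemma phi_low {p r m : ℕ} {D : Finset (ι → ℕ)} (hp : 2 ≤ p) (hr : 1 ≤ r)
    (hm0 : 0 < m) (hmr : m < r) {V : D → ℕ} (hV : memE p D r V)
    (heq : phiMap p D r V = phiMap p D r ((shiftE p D r)^[m] V))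
    (j : ℕ) (hj : j ≤ m) :
    phiMap p D r ((shiftE p D r)^[j] V)
      = phiMap p D m ((shiftE p D m)^[j] (fun d => V d / p ^ (r - m))) := by
  funext k
  have h2r : 2 ≤ p ^ r := two_le_pow hp hr
  have h2m : 2 ≤ p ^ m := two_le_pow hp (by omega)
  have hm1 : 1 ≤ m := hm0
  have hjr : j ≤ r := by omega
  have hV2b : ∀ d : D, V d / p ^ (r - m) ≤ p ^ m - 1 :=
    fun d => div_le_pow_pred hp (le_of_lt hmr) (hV.1 d)
  show sigmaSum D ((shiftE p D r)^[j] V) k / (p ^ r - 1)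
      = sigmaSum D ((shiftE p D m)^[j] (fun d => V d / p ^ (r - m))) k / (p ^ m - 1)
  apply div_eq_div_of_cross (by omega) (by omega) ((memE_iter hp hr hjr hV).2 k).1
  -- cross identity
  obtain ⟨hX, hY⟩ := split_XY hp hr hm0 hmr hV heq k
  have E1 : sigmaSum D ((shiftE p D r)^[j] V) k
      = p ^ j * sigmaSum D (fun d => V d % p ^ (r - j)) k
        + sigmaSum D (fun d => V d / p ^ (r - j)) k := sigma_iter D hp hr hjr V hV.1 k
  have E2 : sigmaSum D ((shiftE p D m)^[j] (fun d => V d / p ^ (r - m))) k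
      = p ^ j * sigmaSum D (fun d => V d / p ^ (r - m) % p ^ (m - j)) k
        + sigmaSum D (fun d => V d / p ^ (r - m) / p ^ (m - j)) k :=
    sigma_iter D hp hm1 hj _ hV2b k
  have E3 : sigmaSum D (fun d => V d / p ^ (r - m) / p ^ (m - j)) k
      = sigmaSum D (fun d => V d / p ^ (r - j)) k := by
    refine sigma_congr D (fun d => ?_) k
    rw [Nat.div_div_eq_div_mul, ← pow_add]
    have : r - m + (m - j) = r - j := by omega
    rw [this]
  have E4 : sigmaSum D (fun d => V d % p ^ (r - j)) k
      = sigmaSum D (fun d => V d % p ^ (r - m)) k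
        + p ^ (r - m) * sigmaSum D (fun d => V d / p ^ (r - m) % p ^ (m - j)) k := by
    have hterm : ∀ d : D, V d % p ^ (r - j)
        = V d % p ^ (r - m) + p ^ (r - m) * (V d / p ^ (r - m) % p ^ (m - j)) := by
      intro d
      have hbc : p ^ (r - m) * p ^ (m - j) = p ^ (r - j) := by
        rw [← pow_add]; congr 1; omega
      rw [← hbc, mod_split]
    rw [sigma_congr D hterm k, sigma_add, sigma_mul]
  have E7 : sigmaSum D (fun d => V d / p ^ (r - m)) k
      = sigmaSum D (fun d => V d / p ^ (r - m) % p ^ (m - j)) k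
        + p ^ (m - j) * sigmaSum D (fun d => V d / p ^ (r - m) / p ^ (m - j)) k :=
    sigma_split D _ (p ^ (m - j)) k
  rw [E1, E2, E3]
  zify [show 1 ≤ p ^ m by omega, show 1 ≤ p ^ r by omega]
  have hab : (p : ℤ) ^ j * (p : ℤ) ^ (m - j) = (p : ℤ) ^ m := by
    rw [← pow_add]; congr 1; omega
  have hmc : (p : ℤ) ^ m * (p : ℤ) ^ (r - m) = (p : ℤ) ^ r := by
    rw [← pow_add]; congr 1; omega
  have hwZ : (sigmaSum D (fun d => V d % p ^ (r - j)) k : ℤ)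
      = (sigmaSum D (fun d => V d % p ^ (r - m)) k : ℤ)
        + (p : ℤ) ^ (r - m) * (sigmaSum D (fun d => V d / p ^ (r - m) % p ^ (m - j)) k : ℤ) := by
    exact_mod_cast E4
  have hXZ : (sigmaSum D (fun d => V d % p ^ (r - m)) k : ℤ)
      = ((p : ℤ) ^ (r - m) - 1) * (phiMap p D r V k : ℤ) := by
    zify [show 1 ≤ p ^ (r - m) by have := two_le_pow hp (show 1 ≤ r - m by omega); omega] at hX
    exact hX
  have hYZ : (sigmaSum D (fun d => V d / p ^ (r - m)) k : ℤ)
      = ((p : ℤ) ^ j * (p : ℤ) ^ (m - j) - 1) * (phiMap p D r V k : ℤ) := by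
    rw [hab]
    zify [show 1 ≤ p ^ m by omega] at hY
    exact hY
  have hYsZ : (sigmaSum D (fun d => V d / p ^ (r - m)) k : ℤ)
      = (sigmaSum D (fun d => V d / p ^ (r - m) % p ^ (m - j)) k : ℤ)
        + (p : ℤ) ^ (m - j) * (sigmaSum D (fun d => V d / p ^ (r - j)) k : ℤ) := by
    rw [← E3]
    exact_mod_cast E7
  have hmain := helper1 ((p : ℤ) ^ j) ((p : ℤ) ^ (m - j)) ((p : ℤ) ^ (r - m))
    (sigmaSum D (fun d => V d % p ^ (r - j)) k : ℤ)
    (sigmaSum D (fun d => V d / p ^ (r - j)) k : ℤ)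
    (sigmaSum D (fun d => V d / p ^ (r - m) % p ^ (m - j)) k : ℤ)
    (sigmaSum D (fun d => V d % p ^ (r - m)) k : ℤ)
    (sigmaSum D (fun d => V d / p ^ (r - m)) k : ℤ)
    (phiMap p D r V k : ℤ) hwZ hXZ hYZ hYsZ
  rw [hab, hmc] at hmain
  linear_combination hmain

lemma phi_high {p r m : ℕ} {D : Finset (ι → ℕ)} (hp : 2 ≤ p) (hr : 1 ≤ r)
    (hm0 : 0 < m) (hmr : m < r) {V : D → ℕ} (hV : memE p D r V)
    (heq : phiMap p D r V = phiMap p D r ((shiftE p D r)^[m] V))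
    (j : ℕ) (hj : j ≤ r - m) :
    phiMap p D r ((shiftE p D r)^[m + j] V)
      = phiMap p D (r - m) ((shiftE p D (r - m))^[j] (fun d => V d % p ^ (r - m))) := by
  funext k
  have h2r : 2 ≤ p ^ r := two_le_pow hp hr
  have h2rm : 2 ≤ p ^ (r - m) := two_le_pow hp (by omega)
  have hrm1 : 1 ≤ r - m := by omega
  have hmjr : m + j ≤ r := by omega
  have hV1b : ∀ d : D, V d % p ^ (r - m) ≤ p ^ (r - m) - 1 := by
    intro d
    have := Nat.mod_lt (V d) (pow_pos' hp (r - m))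
    omega
  show sigmaSum D ((shiftE p D r)^[m + j] V) k / (p ^ r - 1)
      = sigmaSum D ((shiftE p D (r - m))^[j] (fun d => V d % p ^ (r - m))) k / (p ^ (r - m) - 1)
  apply div_eq_div_of_cross (by omega) (by omega) ((memE_iter hp hr hmjr hV).2 k).1
  obtain ⟨hX, hY⟩ := split_XY hp hr hm0 hmr hV heq k
  have E1 : sigmaSum D ((shiftE p D r)^[m + j] V) k
      = p ^ (m + j) * sigmaSum D (fun d => V d % p ^ (r - (m + j))) k
        + sigmaSum D (fun d => V d / p ^ (r - (m + j))) k := sigma_iter D hp hr hmjr V hV.1 k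
  have E2 : sigmaSum D ((shiftE p D (r - m))^[j] (fun d => V d % p ^ (r - m))) k
      = p ^ j * sigmaSum D (fun d => V d % p ^ (r - m) % p ^ (r - m - j)) k
        + sigmaSum D (fun d => V d % p ^ (r - m) / p ^ (r - m - j)) k :=
    sigma_iter D hp hrm1 hj _ hV1b k
  have E3 : sigmaSum D (fun d => V d % p ^ (r - m) % p ^ (r - m - j)) k
      = sigmaSum D (fun d => V d % p ^ (r - (m + j))) k := by
    refine sigma_congr D (fun d => ?_) k
    have h1 : V d % p ^ (r - m) % p ^ (r - m - j) = V d % p ^ (r - m - j) :=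
      Nat.mod_mod_of_dvd _ (pow_dvd_pow p (by omega))
    rw [h1]
    congr 2
    omega
  have E4 : sigmaSum D (fun d => V d % p ^ (r - m) / p ^ (r - m - j)) k
      = sigmaSum D (fun d => V d / p ^ (r - (m + j)) % p ^ j) k := by
    refine sigma_congr D (fun d => ?_) k
    have hbc : p ^ (r - (m + j)) * p ^ j = p ^ (r - m) := by
      rw [← pow_add]; congr 1; omega
    have h1 : V d / p ^ (r - (m + j)) % p ^ j = V d % (p ^ (r - (m + j)) * p ^ j) / p ^ (r - (m + j)) :=
      (Nat.mod_mul_right_div_self _ _ _).symm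
    rw [h1, hbc]
    congr 2
    omega
  have E5 : sigmaSum D (fun d => V d / p ^ (r - (m + j))) k
      = sigmaSum D (fun d => V d / p ^ (r - (m + j)) % p ^ j) k
        + p ^ j * sigmaSum D (fun d => V d / p ^ (r - m)) k := by
    have h1 := sigma_split D (fun d => V d / p ^ (r - (m + j))) (p ^ j) k
    have h2 : sigmaSum D (fun d => V d / p ^ (r - (m + j)) / p ^ j) k
        = sigmaSum D (fun d => V d / p ^ (r - m)) k := by
      refine sigma_congr D (fun d => ?_) k
      rw [Nat.div_div_eq_div_mul, ← pow_add]
      congr 2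
      omega
    rw [h1, h2]
  have E6 : sigmaSum D (fun d => V d % p ^ (r - m)) k
      = sigmaSum D (fun d => V d % p ^ (r - (m + j))) k
        + p ^ (r - (m + j)) * sigmaSum D (fun d => V d / p ^ (r - (m + j)) % p ^ j) k := by
    have hbc : p ^ (r - (m + j)) * p ^ j = p ^ (r - m) := by
      rw [← pow_add]; congr 1; omega
    have hterm : ∀ d : D, V d % p ^ (r - m)
        = V d % p ^ (r - (m + j)) + p ^ (r - (m + j)) * (V d / p ^ (r - (m + j)) % p ^ j) := by
      intro d
      rw [← hbc, mod_split]
    rw [sigma_congr D hterm k, sigma_add, sigma_mul]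
  rw [E1, E2, E3, E4]
  zify [show 1 ≤ p ^ r by omega, show 1 ≤ p ^ (r - m) by omega]
  have hab : (p : ℤ) ^ j * (p : ℤ) ^ (r - m - j) = (p : ℤ) ^ (r - m) := by
    rw [← pow_add]; congr 1; omega
  have habc : (p : ℤ) ^ (r - m) * (p : ℤ) ^ m = (p : ℤ) ^ r := by
    rw [← pow_add]; congr 1; omega
  have hca : (p : ℤ) ^ m * (p : ℤ) ^ j = (p : ℤ) ^ (m + j) := by
    rw [← pow_add]
  have hbZ : (sigmaSum D (fun d => V d / p ^ (r - (m + j))) k : ℤ)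
      = (sigmaSum D (fun d => V d / p ^ (r - (m + j)) % p ^ j) k : ℤ)
        + (p : ℤ) ^ j * (sigmaSum D (fun d => V d / p ^ (r - m)) k : ℤ) := by
    exact_mod_cast E5
  have hXZ1 : (sigmaSum D (fun d => V d % p ^ (r - m)) k : ℤ)
      = (sigmaSum D (fun d => V d % p ^ (r - (m + j))) k : ℤ)
        + (p : ℤ) ^ (r - m - j) * (sigmaSum D (fun d => V d / p ^ (r - (m + j)) % p ^ j) k : ℤ) := by
    have : r - (m + j) = r - m - j := by omega
    rw [← this]
    exact_mod_cast E6
  have hXZ2 : (sigmaSum D (fun d => V d % p ^ (r - m)) k : ℤ)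
      = ((p : ℤ) ^ j * (p : ℤ) ^ (r - m - j) - 1) * (phiMap p D r V k : ℤ) := by
    rw [hab]
    zify [show 1 ≤ p ^ (r - m) by omega] at hX
    exact hX
  have hYZ : (sigmaSum D (fun d => V d / p ^ (r - m)) k : ℤ)
      = ((p : ℤ) ^ m - 1) * (phiMap p D r V k : ℤ) := by
    zify [show 1 ≤ p ^ m from by have := two_le_pow hp (show 1 ≤ m by omega); omega] at hY
    exact hY
  have hmain := helper2 ((p : ℤ) ^ j) ((p : ℤ) ^ (r - m - j)) ((p : ℤ) ^ m)
    (sigmaSum D (fun d => V d % p ^ (r - (m + j))) k : ℤ)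
    (sigmaSum D (fun d => V d / p ^ (r - (m + j))) k : ℤ)
    (sigmaSum D (fun d => V d / p ^ (r - (m + j)) % p ^ j) k : ℤ)
    (sigmaSum D (fun d => V d % p ^ (r - m)) k : ℤ)
    (sigmaSum D (fun d => V d / p ^ (r - m)) k : ℤ)
    (phiMap p D r V k : ℤ) hbZ hXZ1 hXZ2 hYZ
  rw [hab, habc] at hmain
  rw [show (p : ℤ) ^ m * (p : ℤ) ^ j = (p : ℤ) ^ (m + j) from hca] at hmain
  linear_combination -hmain

lemma split_memE {p r m : ℕ} {D : Finset (ι → ℕ)} (hp : 2 ≤ p) (hr : 1 ≤ r)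
    (hm0 : 0 < m) (hmr : m < r) {V : D → ℕ} (hV : memE p D r V)
    (heq : phiMap p D r V = phiMap p D r ((shiftE p D r)^[m] V)) :
    memE p D (r - m) (fun d => V d % p ^ (r - m)) ∧ memE p D m (fun d => V d / p ^ (r - m)) := by
  have h2rm : 2 ≤ p ^ (r - m) := two_le_pow hp (by omega)
  have h2m : 2 ≤ p ^ m := two_le_pow hp (by omega)
  have h2r : 2 ≤ p ^ r := two_le_pow hp hr
  have hepos : ∀ k, 0 < phiMap p D r V k := by
    intro k
    have hσ : sigmaSum D V k = (p ^ r - 1) * phiMap p D r V k := by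
      rw [phiMap, mul_comm]
      exact (Nat.div_mul_cancel (hV.2 k).1).symm
    have := (hV.2 k).2
    by_contra hc
    push_neg at hc
    interval_cases h : phiMap p D r V k
    · rw [hσ] at this; simp at this
  refine ⟨⟨fun d => ?_, fun k => ?_⟩, ⟨fun d => ?_, fun k => ?_⟩⟩
  · show V d % p ^ (r - m) ≤ p ^ (r - m) - 1
    have := Nat.mod_lt (V d) (pow_pos' hp (r - m))
    omega
  · obtain ⟨hX, _⟩ := split_XY hp hr hm0 hmr hV heq k
    rw [hX]
    exact ⟨Dvd.intro _ rfl, Nat.mul_pos (by omega) (hepos k)⟩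
  · exact div_le_pow_pred hp (le_of_lt hmr) (hV.1 d)
  · obtain ⟨_, hY⟩ := split_XY hp hr hm0 hmr hV heq k
    rw [hY]
    exact ⟨Dvd.intro _ rfl, Nat.mul_pos (by omega) (hepos k)⟩

end SplitLemmas

/-- For a minimal solution `U ∈ E_{D,p}(r)`, the image of its support is contained
in the `p`-minimal support `Σ_p(D)`. -/
theorem supp_of_minimal_subset_minSupport (p : ℕ) (hp : p.Prime)
    {ι : Type} [Fintype ι] [Nonempty ι]
    (D : Finset (ι → ℕ)) (hD : D.Nonempty)
    (hcoord : ∀ k : ι, ∃ d ∈ D, 0 < d k)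
    (r : ℕ) (hr : 1 ≤ r) (U : D → ℕ) (hU : minimalSol p D r U) :
    Set.range (suppMap p D r U) ⊆ minSupport p D := by
  have hp2 : 2 ≤ p := hp.two_le
  clear hp hD hcoord
  induction r using Nat.strong_induction_on generalizing U with
  | _ r ih =>
  by_cases hinj : Function.Injective (suppMap p D r U)
  · rintro x ⟨i, hi⟩
    exact ⟨r, hr, U, ⟨hU, hinj⟩, ⟨i, hi⟩⟩
  · obtain ⟨k, l, hkl, hne⟩ := Function.not_injective_iff.mp hinj
    haveI : NeZero r := ⟨by omega⟩
    have hUE : memE p D r U := hU.1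
    have hvalne : k.val ≠ l.val := fun h => hne (ZMod.val_injective r h)
    have key : ∀ a b : ℕ, a < b → b < r →
        phiMap p D r ((shiftE p D r)^[a] U) = phiMap p D r ((shiftE p D r)^[b] U) →
        Set.range (suppMap p D r U) ⊆ minSupport p D := by
      intro a b hab hbr heq0
      have hm0 : 0 < b - a := by omega
      have hmr : b - a < r := by omega
      have hV : memE p D r ((shiftE p D r)^[a] U) := memE_iter hp2 hr (by omega) hUE
      have hshift : (shiftE p D r)^[b] U = (shiftE p D r)^[b - a] ((shiftE p D r)^[a] U) := by
        rw [← Function.iterate_add_apply]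
        congr 1
        omega
      rw [hshift] at heq0
      obtain ⟨hV1, hV2⟩ := split_memE hp2 hr hm0 hmr hV heq0
      have hsplit : spU p D ((shiftE p D r)^[a] U)
          = spU p D (fun d => ((shiftE p D r)^[a] U) d % p ^ (r - (b - a)))
            + spU p D (fun d => ((shiftE p D r)^[a] U) d / p ^ (r - (b - a))) :=
        spU_decomp hp2 D (r - (b - a)) _
      have hVU : spU p D ((shiftE p D r)^[a] U) = spU p D U := spU_iter hp2 hr (by omega) hUE
      have hge1 := spU_ge hp2 D (r - (b - a)) (by omega) _ hV1
      have hge2 := spU_ge hp2 D (b - a) (by omega) _ hV2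
      have hnat : spU p D (fun d => ((shiftE p D r)^[a] U) d % p ^ (r - (b - a)))
          + spU p D (fun d => ((shiftE p D r)^[a] U) d / p ^ (r - (b - a)))
          = spU p D U := by rw [← hsplit, hVU]
      have hsum : (spU p D (fun d => ((shiftE p D r)^[a] U) d % p ^ (r - (b - a))) : ℝ)
          + (spU p D (fun d => ((shiftE p D r)^[a] U) d / p ^ (r - (b - a))) : ℝ)
          = ((p : ℝ) - 1) * (r : ℝ) * density p D := by
        rw [← hU.2]
        exact_mod_cast hnat
      have hcastR : ((r - (b - a) : ℕ) : ℝ) = (r : ℝ) - ((b - a : ℕ) : ℝ) :=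
        Nat.cast_sub (by omega)
      have hiden : ((p : ℝ) - 1) * ((r - (b - a) : ℕ) : ℝ) * density p D
          + ((p : ℝ) - 1) * ((b - a : ℕ) : ℝ) * density p D
          = ((p : ℝ) - 1) * (r : ℝ) * density p D := by
        rw [hcastR]; ring
      have hmin1 : minimalSol p D (r - (b - a))
          (fun d => ((shiftE p D r)^[a] U) d % p ^ (r - (b - a))) := ⟨hV1, by linarith⟩
      have hmin2 : minimalSol p D (b - a)
          (fun d => ((shiftE p D r)^[a] U) d / p ^ (r - (b - a))) := ⟨hV2, by linarith⟩
      have hsub1 := ih (r - (b - a)) (by omega) (by omega) _ hmin1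
      have hsub2 := ih (b - a) (by omega) (by omega) _ hmin2
      rintro x ⟨i, hi⟩
      have hunroll : (shiftE p D r)^[i.val + (r - a)] ((shiftE p D r)^[a] U)
          = (shiftE p D r)^[i.val] U := by
        rw [← Function.iterate_add_apply]
        have h9 : i.val + (r - a) + a = i.val + r := by omega
        rw [h9, Function.iterate_add_apply, iterate_period hp2 hr hUE]
      have hxj : phiMap p D r
          ((shiftE p D r)^[(i.val + (r - a)) % r] ((shiftE p D r)^[a] U)) = x := by
        rw [← iterate_mod hp2 hr hV, hunroll]
        exact hi
      have hjlt : (i.val + (r - a)) % r < r := Nat.mod_lt _ (by omega)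
      rcases Nat.lt_or_ge ((i.val + (r - a)) % r) (b - a) with hcase | hcase
      · have hlow := phi_low hp2 hr hm0 hmr hV heq0 ((i.val + (r - a)) % r) (le_of_lt hcase)
        refine hsub2 ?_
        rw [← hxj, hlow]
        exact phi_mem_range hp2 (by omega) hV2 _
      · have hsum2 : (b - a) + ((i.val + (r - a)) % r - (b - a)) = (i.val + (r - a)) % r := by
          omega
        have hhigh := phi_high hp2 hr hm0 hmr hV heq0
          ((i.val + (r - a)) % r - (b - a)) (by omega)
        refine hsub1 ?_
        rw [← hxj, ← hsum2, hhigh]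
        exact phi_mem_range hp2 (by omega) hV1 _
    rcases Nat.lt_or_ge k.val l.val with h | h
    · exact key k.val l.val h (ZMod.val_lt l) hkl
    · have h' : l.val < k.val := by omega
      exact key l.val k.val h' (ZMod.val_lt k) hkl.symm
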